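/- Let n ≥ 1, let U ⊆ ℝⁿ be open and convex, let f : ℝⁿ → ℝⁿ be continuously differentiable on U with Jacobian J_f, let xₙ ∈ U, and let A : ℝⁿ → ℝⁿ be an invertible linear map. Assume: (A1) there is ω > 0 such that for every v ∈ U and every t ∈ [0,1], writing z = t·xₙ + (1−t)·v, one has ‖A⁻¹ (J_f(xₙ) − J_f(z)) (xₙ − v)‖ ≤ ω (1−t) ‖xₙ − v‖²; (A2) there is κ ∈ [0,1) with ‖Id − A⁻¹ J_f(xₙ)‖ ≤ κ; (A3) setting αₙ = ‖A⁻¹ f(xₙ)‖, one has ω αₙ ≤ (1−κ)²/2; and the closed ball of radius r = (1−κ)/ω − √((1−κ)²/ω² − 2αₙ/ω) centered at xₙ is contained in U. Then the map g(v) = v − A⁻¹ f(v) maps the closed ball B_r(xₙ) into itself. -/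

import Mathlib

/-- Ball invariance for the **smaller root**: under (A1)--(A3) and assuming the closed
ball of radius `r = (1-κ)/ω - √((1-κ)²/ω² - 2αₙ/ω)` around `xn` lies in `U`, the
simplified Newton map `g v = v - A⁻¹ (f v)` maps `B_r(xn)` into itself. -/
theorem simplified_newton_maps_small_ball_into_itself
    {n : ℕ} (hn : 1 ≤ n)
    (U : Set (EuclideanSpace ℝ (Fin n))) (hUopen : IsOpen U) (hUconv : Convex ℝ U)
    (f : EuclideanSpace ℝ (Fin n) → EuclideanSpace ℝ (Fin n))
    (J : EuclideanSpace ℝ (Fin n) →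
      (EuclideanSpace ℝ (Fin n) →L[ℝ] EuclideanSpace ℝ (Fin n)))
    (hf : ∀ x ∈ U, HasFDerivAt f (J x) x)
    (hJcont : ContinuousOn J U)
    (xn : EuclideanSpace ℝ (Fin n)) (hxn : xn ∈ U)
    (A : EuclideanSpace ℝ (Fin n) ≃L[ℝ] EuclideanSpace ℝ (Fin n))
    (ω κ : ℝ) (hω : 0 < ω) (hκ0 : 0 ≤ κ) (hκ1 : κ < 1)
    (hA1 : ∀ v ∈ U, ∀ t ∈ Set.Icc (0:ℝ) 1,
      ‖A.symm ((J xn - J (t • xn + (1 - t) • v)) (xn - v))‖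
        ≤ ω * (1 - t) * ‖xn - v‖ ^ 2)
    (hA2 : ‖ContinuousLinearMap.id ℝ (EuclideanSpace ℝ (Fin n))
        - (A.symm : EuclideanSpace ℝ (Fin n) →L[ℝ] EuclideanSpace ℝ (Fin n)).comp (J xn)‖
        ≤ κ)
    (α : ℝ) (hα : α = ‖A.symm (f xn)‖)
    (hA3 : ω * α ≤ (1 - κ) ^ 2 / 2)
    (r : ℝ) (hr : r = (1 - κ) / ω - Real.sqrt ((1 - κ) ^ 2 / ω ^ 2 - 2 * α / ω))
    (hball : Metric.closedBall xn r ⊆ U) :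
    Set.MapsTo (fun v => v - A.symm (f v))
      (Metric.closedBall xn r) (Metric.closedBall xn r) := by
  -- basic real-number facts
  have hα0 : 0 ≤ α := hα ▸ norm_nonneg _
  have hω' : ω ≠ 0 := ne_of_gt hω
  have hκω : 0 ≤ (1 - κ) / ω := div_nonneg (by linarith) hω.le
  have hD : 0 ≤ (1 - κ) ^ 2 / ω ^ 2 - 2 * α / ω := by
    have h1 : (1 - κ) ^ 2 / ω ^ 2 - 2 * α / ω = ((1 - κ) ^ 2 - 2 * ω * α) / ω ^ 2 := by
      field_simp
    rw [h1]
    apply div_nonneg _ (by positivity)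
    nlinarith
  set s := Real.sqrt ((1 - κ) ^ 2 / ω ^ 2 - 2 * α / ω) with hs
  have hs0 : 0 ≤ s := Real.sqrt_nonneg _
  have hs2 : s ^ 2 = (1 - κ) ^ 2 / ω ^ 2 - 2 * α / ω := Real.sq_sqrt hD
  have hsle : s ≤ (1 - κ) / ω := by
    rw [hs, show (1 - κ) / ω = Real.sqrt (((1 - κ) / ω) ^ 2) from
      (Real.sqrt_sq hκω).symm]
    apply Real.sqrt_le_sqrt
    have h2 : 0 ≤ 2 * α / ω := by positivity
    rw [div_pow]; linarith
  have hr0 : 0 ≤ r := by rw [hr]; linarith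
  have hroot : ω / 2 * r ^ 2 + κ * r + α = r := by
    set q := (1 - κ) / ω with hqdef
    have hq : ω * q = 1 - κ := by rw [hqdef]; field_simp
    have h2' : ω * s ^ 2 = ω * q ^ 2 - 2 * α := by
      rw [hs2, hqdef]; field_simp
    have hrq : r = q - s := hr
    rw [hrq]
    linear_combination (1 / 2) * h2' + (q - s) * hq
  intro v hv
  have hvr : ‖v - xn‖ ≤ r := by
    rwa [Metric.mem_closedBall, dist_eq_norm] at hv
  have hR0 : 0 ≤ ‖v - xn‖ := norm_nonneg _
  -- points on the segment
  have hseg : ∀ t : ℝ, t ∈ Set.Icc (0:ℝ) 1 → xn + t • (v - xn) ∈ U := by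
    intro t ht
    apply hball
    rw [Metric.mem_closedBall, dist_eq_norm]
    have h3 : xn + t • (v - xn) - xn = t • (v - xn) := by abel
    rw [h3, norm_smul, Real.norm_eq_abs, abs_of_nonneg ht.1]
    calc t * ‖v - xn‖ ≤ 1 * r := by
          apply mul_le_mul ht.2 hvr hR0 zero_le_one
      _ = r := one_mul r
  have hvU : v ∈ U := hball hv
  -- the auxiliary path
  set c : EuclideanSpace ℝ (Fin n) := A.symm ((J xn) (v - xn)) with hc
  set φ : ℝ → EuclideanSpace ℝ (Fin n) :=
    fun t => A.symm (f (xn + t • (v - xn))) - t • c - A.symm (f xn) with hφ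
  have hderiv : ∀ t ∈ Set.Icc (0:ℝ) 1, HasDerivAt φ
      (A.symm (((J (xn + t • (v - xn))) - J xn) (v - xn))) t := by
    intro t ht
    have hp : HasDerivAt (fun t : ℝ => xn + t • (v - xn)) (v - xn) t := by
      simpa using ((hasDerivAt_id t).smul_const (v - xn)).const_add xn
    have hf' : HasDerivAt (fun t : ℝ => f (xn + t • (v - xn)))
        ((J (xn + t • (v - xn))) (v - xn)) t :=
      (hf _ (hseg t ht)).comp_hasDerivAt t hp
    have hAf : HasDerivAt (fun t : ℝ => A.symm (f (xn + t • (v - xn))))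
        (A.symm ((J (xn + t • (v - xn))) (v - xn))) t :=
      ((A.symm : EuclideanSpace ℝ (Fin n) →L[ℝ]
        EuclideanSpace ℝ (Fin n)).hasFDerivAt.comp_hasDerivAt t hf')
    have hc' : HasDerivAt (fun t : ℝ => t • c) c t := by
      simpa using (hasDerivAt_id t).smul_const c
    have hd : A.symm (((J (xn + t • (v - xn))) - J xn) (v - xn))
        = A.symm ((J (xn + t • (v - xn))) (v - xn)) - c := by
      simp only [hc, ContinuousLinearMap.sub_apply, map_sub]
      abel
    rw [hd]
    exact (hAf.sub hc').sub_const (A.symm (f xn))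
  -- fencing bound
  have hbound : ‖φ 1 - φ 0‖ ≤ ω / 2 * ‖v - xn‖ ^ 2 := by
    have key : ∀ x ∈ Set.Icc (0:ℝ) 1, ‖φ x - φ 0‖ ≤ ω * ‖v - xn‖ ^ 2 * x ^ 2 / 2 := by
      intro x hx
      refine image_norm_le_of_norm_deriv_right_le_deriv_boundary
        (f := fun t => φ t - φ 0)
        (f' := fun t => A.symm (((J (xn + t • (v - xn))) - J xn) (v - xn)))
        (B := fun x => ω * ‖v - xn‖ ^ 2 * x ^ 2 / 2)
        (B' := fun x => ω * ‖v - xn‖ ^ 2 * x) ?_ ?_ ?_ ?_ ?_ hx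
      · intro x hx
        exact ((hderiv x hx).sub_const (φ 0)).continuousAt.continuousWithinAt
      · intro x hx
        exact (((hderiv x (Set.mem_Icc_of_Ico hx)).sub_const (φ 0)).hasDerivWithinAt)
      · simp
      · intro x
        have : HasDerivAt (fun x : ℝ => ω * ‖v - xn‖ ^ 2 * x ^ 2 / 2)
            (ω * ‖v - xn‖ ^ 2 * x) x := by
          have := ((hasDerivAt_pow 2 x).const_mul (ω * ‖v - xn‖ ^ 2)).div_const 2
          exact this.congr_deriv (by ring)
        exact this
      · intro x hx
        have hx' : x ∈ Set.Icc (0:ℝ) 1 := Set.mem_Icc_of_Ico hx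
        have h1 := hA1 v hvU (1 - x) ⟨by linarith [hx'.2], by linarith [hx'.1]⟩
        have he : (1 - x) • xn + (1 - (1 - x)) • v = xn + x • (v - xn) := by
          simp only [smul_sub, sub_smul, one_smul]
          module
        rw [he] at h1
        have h2 : (J xn - J (xn + x • (v - xn))) (xn - v)
            = ((J (xn + x • (v - xn))) - J xn) (v - xn) := by
          simp only [ContinuousLinearMap.sub_apply, map_sub]
          abel
        rw [h2] at h1
        calc ‖A.symm (((J (xn + x • (v - xn))) - J xn) (v - xn))‖
            ≤ ω * (1 - (1 - x)) * ‖xn - v‖ ^ 2 := h1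
          _ = ω * ‖v - xn‖ ^ 2 * x := by rw [norm_sub_rev]; ring
    have := key 1 ⟨zero_le_one, le_refl 1⟩
    calc ‖φ 1 - φ 0‖ ≤ ω * ‖v - xn‖ ^ 2 * (1:ℝ) ^ 2 / 2 := this
      _ = ω / 2 * ‖v - xn‖ ^ 2 := by ring
  -- decompose g v - xn
  have hdecomp : (v - A.symm (f v)) - xn
      = -(A.symm (f xn)) + ((v - xn) - c) - (φ 1 - φ 0) := by
    have hx1 : xn + (v - xn) = v := by abel
    simp only [hφ, one_smul, zero_smul, sub_zero, add_zero, hx1]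
    abel
  have hId : ‖(v - xn) - c‖ ≤ κ * ‖v - xn‖ := by
    have h1 : (v - xn) - c = (ContinuousLinearMap.id ℝ (EuclideanSpace ℝ (Fin n))
        - (A.symm : EuclideanSpace ℝ (Fin n) →L[ℝ]
          EuclideanSpace ℝ (Fin n)).comp (J xn)) (v - xn) := by
      simp [hc]
    rw [h1]
    calc ‖_‖ ≤ ‖ContinuousLinearMap.id ℝ (EuclideanSpace ℝ (Fin n))
        - (A.symm : EuclideanSpace ℝ (Fin n) →L[ℝ]
          EuclideanSpace ℝ (Fin n)).comp (J xn)‖ * ‖v - xn‖ :=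
        ContinuousLinearMap.le_opNorm _ _
      _ ≤ κ * ‖v - xn‖ := mul_le_mul_of_nonneg_right hA2 hR0
  -- final estimate
  rw [Metric.mem_closedBall, dist_eq_norm]
  calc ‖(v - A.symm (f v)) - xn‖
      = ‖-(A.symm (f xn)) + ((v - xn) - c) - (φ 1 - φ 0)‖ := by rw [hdecomp]
    _ ≤ ‖-(A.symm (f xn)) + ((v - xn) - c)‖ + ‖φ 1 - φ 0‖ := norm_sub_le _ _
    _ ≤ (‖-(A.symm (f xn))‖ + ‖(v - xn) - c‖) + ‖φ 1 - φ 0‖ := by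
        gcongr; exact norm_add_le _ _
    _ ≤ (α + κ * ‖v - xn‖) + ω / 2 * ‖v - xn‖ ^ 2 := by
        rw [norm_neg, ← hα]; gcongr
    _ ≤ (α + κ * r) + ω / 2 * r ^ 2 := by
        gcongr
    _ = r := by linarith [hroot]
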